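/- Let M ≥ 2 and let η_0, η_1, …, η_M be elements of an associative unital ℂ-algebra satisfying: η_j η_{j+1} = −η_{j+1} η_j for 0 ≤ j ≤ M−1; η_j η_k = η_k η_j for 0 ≤ j < k ≤ M with k − j > 1; η_j² = 1 for 1 ≤ j ≤ M; and η_0² = −1. Define φ_j = (1/√2) · exp(iπ(j−1)/2) · η_0 η_1 ⋯ η_j for 0 ≤ j ≤ M−1. Then the φ_j satisfy the canonical anticommutation relations φ_j φ_k + φ_k φ_j = δ_{jk}·1 for all 0 ≤ j, k ≤ M−1, and moreover (−2i) φ_j φ_{j+1} = η_{j+1} for 0 ≤ j ≤ M−2. -/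

import Mathlib

open Complex

private lemma jw_prod_comm {A : Type*} [Ring A] (η : ℕ → A) (x : A) :
    ∀ L : List ℕ, (∀ b ∈ L, η b * x = x * η b) →
      (L.map η).prod * x = x * (L.map η).prod := by
  intro L
  induction L with
  | nil => simp
  | cons a L ih =>
    intro h
    simp only [List.map_cons, List.prod_cons, mul_assoc]
    rw [ih (fun b hb => h b (List.mem_cons_of_mem _ hb)), ← mul_assoc,
      h a List.mem_cons_self, mul_assoc]

noncomputable def jwc (j : ℕ) : ℂ :=
  (Real.sqrt 2 : ℂ)⁻¹ * Complex.exp (Complex.I * (Real.pi : ℂ) * ((j : ℂ) - 1) / 2)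

private lemma jw_sqrt2 : ((Real.sqrt 2 : ℝ) : ℂ)⁻¹ * ((Real.sqrt 2 : ℝ) : ℂ)⁻¹ = 1 / 2 := by
  have h0 : Real.sqrt 2 * Real.sqrt 2 = 2 := Real.mul_self_sqrt (by norm_num)
  have h1 : ((Real.sqrt 2 : ℝ) : ℂ) * ((Real.sqrt 2 : ℝ) : ℂ) = 2 := by
    rw [← Complex.ofReal_mul, h0]; norm_num
  have h2 : ((Real.sqrt 2 : ℝ) : ℂ) ≠ 0 := by
    intro h; rw [h] at h1; simp at h1
  rw [← mul_inv, h1]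
  norm_num

private lemma jw_exp_nat (j : ℕ) :
    Complex.exp ((j : ℂ) * ((Real.pi : ℂ) * Complex.I)) = (-1) ^ j := by
  rw [Complex.exp_nat_mul, Complex.exp_pi_mul_I]

private lemma jw_exp_half : Complex.exp ((Real.pi : ℂ) * Complex.I / 2) = Complex.I := by
  rw [show ((Real.pi : ℂ) * Complex.I / 2) = ((Real.pi / 2 : ℝ) : ℂ) * Complex.I by
    push_cast; ring, Complex.exp_mul_I, ← Complex.ofReal_cos, ← Complex.ofReal_sin,
    Real.cos_pi_div_two, Real.sin_pi_div_two]
  simp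

private lemma jw_scalarA (j : ℕ) : jwc j * jwc j * (-1) ^ (j + 1) = 1 / 2 := by
  have h2 : Complex.exp (Complex.I * (Real.pi : ℂ) * ((j : ℂ) - 1) / 2) *
      Complex.exp (Complex.I * (Real.pi : ℂ) * ((j : ℂ) - 1) / 2) = -(-1) ^ j := by
    rw [← Complex.exp_add, show Complex.I * (Real.pi : ℂ) * ((j : ℂ) - 1) / 2 +
        Complex.I * (Real.pi : ℂ) * ((j : ℂ) - 1) / 2 =
        (j : ℂ) * ((Real.pi : ℂ) * Complex.I) - (Real.pi : ℂ) * Complex.I by ring,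
      Complex.exp_sub, jw_exp_nat, Complex.exp_pi_mul_I, div_neg, div_one]
  have hx : ((-1 : ℂ)) ^ j * (-1) ^ j = 1 := by rw [← mul_pow]; norm_num
  calc jwc j * jwc j * (-1) ^ (j + 1)
      = (((Real.sqrt 2 : ℝ) : ℂ)⁻¹ * ((Real.sqrt 2 : ℝ) : ℂ)⁻¹) *
        (Complex.exp (Complex.I * (Real.pi : ℂ) * ((j : ℂ) - 1) / 2) *
         Complex.exp (Complex.I * (Real.pi : ℂ) * ((j : ℂ) - 1) / 2)) * (-1) ^ (j + 1) := by
        unfold jwc; ring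
    _ = (1 / 2) * (-(-1) ^ j) * (-1) ^ (j + 1) := by rw [jw_sqrt2, h2]
    _ = 1 / 2 := by rw [pow_succ]; linear_combination (1 / 2 : ℂ) * hx

private lemma jw_scalarB (j : ℕ) :
    (-2 * Complex.I) * (jwc j * jwc (j + 1) * (-1) ^ (j + 1)) = 1 := by
  have h2 : Complex.exp (Complex.I * (Real.pi : ℂ) * ((j : ℂ) - 1) / 2) *
      Complex.exp (Complex.I * (Real.pi : ℂ) * (((j + 1 : ℕ) : ℂ) - 1) / 2) =
      (-1) ^ j / Complex.I := by
    rw [← Complex.exp_add, show Complex.I * (Real.pi : ℂ) * ((j : ℂ) - 1) / 2 +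
        Complex.I * (Real.pi : ℂ) * (((j + 1 : ℕ) : ℂ) - 1) / 2 =
        (j : ℂ) * ((Real.pi : ℂ) * Complex.I) - (Real.pi : ℂ) * Complex.I / 2 by
          push_cast; ring,
      Complex.exp_sub, jw_exp_nat, jw_exp_half]
  have hx : ((-1 : ℂ)) ^ j * (-1) ^ j = 1 := by rw [← mul_pow]; norm_num
  calc (-2 * Complex.I) * (jwc j * jwc (j + 1) * (-1) ^ (j + 1))
      = (-2 * Complex.I) * ((((Real.sqrt 2 : ℝ) : ℂ)⁻¹ * ((Real.sqrt 2 : ℝ) : ℂ)⁻¹) *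
        (Complex.exp (Complex.I * (Real.pi : ℂ) * ((j : ℂ) - 1) / 2) *
         Complex.exp (Complex.I * (Real.pi : ℂ) * (((j + 1 : ℕ) : ℂ) - 1) / 2)) *
        (-1) ^ (j + 1)) := by unfold jwc; ring
    _ = (-2 * Complex.I) * ((1 / 2) * ((-1) ^ j / Complex.I) * (-1) ^ (j + 1)) := by
        rw [jw_sqrt2, h2]
    _ = 1 := by
        rw [pow_succ, Complex.div_I]
        linear_combination (-Complex.I ^ 2) * hx - Complex.I_sq

section JW

variable {A : Type*} [Ring A] (η : ℕ → A)

/-- product `η a * η (a+1) * ⋯ * η (a+n-1)` -/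
noncomputable def jwT (a n : ℕ) : A := ((List.range' a n).map η).prod

lemma jwT_cons (a n : ℕ) : jwT η a (n + 1) = η a * jwT η (a + 1) n := by
  simp [jwT, List.range'_succ]

lemma jwT_one (a : ℕ) : jwT η a 1 = η a := by
  simp [jwT, List.range'_succ]

lemma jwT_append (a m n : ℕ) : jwT η a (m + n) = jwT η a m * jwT η (a + m) n := by
  unfold jwT
  have h : List.range' a m 1 ++ List.range' (a + 1 * m) n 1 = List.range' a (m + n) 1 :=
    List.range'_append
  simp only [one_mul] at h
  rw [← h, List.map_append, List.prod_append]

variable {M : ℕ}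

lemma jw_comm_far
    (hcomm : ∀ j k : ℕ, j < k → k ≤ M → 1 < k - j → η j * η k = η k * η j)
    (a b n : ℕ) (h1 : a + 2 ≤ b) (h2 : b + n ≤ M + 1) :
    jwT η b n * η a = η a * jwT η b n := by
  apply jw_prod_comm
  intro i hi
  rw [List.mem_range'] at hi
  obtain ⟨k, hk, rfl⟩ := hi
  exact (hcomm a (b + 1 * k) (by omega) (by omega) (by omega)).symm

lemma jw_comm_pref
    (hcomm : ∀ j k : ℕ, j < k → k ≤ M → 1 < k - j → η j * η k = η k * η j)
    (b n : ℕ) (h1 : n + 1 ≤ b) (h2 : b ≤ M) :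
    η b * jwT η 0 n = jwT η 0 n * η b := by
  refine (jw_prod_comm η (η b) _ ?_).symm
  intro i hi
  rw [List.mem_range'] at hi
  obtain ⟨k, hk, rfl⟩ := hi
  exact hcomm (0 + 1 * k) b (by omega) h2 (by omega)

lemma jw_anti (hM : 2 ≤ M)
    (hanti : ∀ j : ℕ, j ≤ M - 1 → η j * η (j + 1) = -(η (j + 1) * η j))
    (m : ℕ) (hm : m + 1 ≤ M) : η (m + 1) * η m = -(η m * η (m + 1)) := by
  rw [hanti m (by omega), neg_neg]

lemma jw_anti_tail (hM : 2 ≤ M)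
    (hanti : ∀ j : ℕ, j ≤ M - 1 → η j * η (j + 1) = -(η (j + 1) * η j))
    (hcomm : ∀ j k : ℕ, j < k → k ≤ M → 1 < k - j → η j * η k = η k * η j)
    (m n : ℕ) (hm : m + 1 ≤ M) (hn : m + 2 + n ≤ M + 1) :
    jwT η (m + 1) (n + 1) * η m = -(η m * jwT η (m + 1) (n + 1)) := by
  rw [jwT_cons η (m + 1) n, mul_assoc,
    jw_comm_far η hcomm m (m + 2) n (le_refl _) (by omega),
    ← mul_assoc, jw_anti η hM hanti m hm, neg_mul, mul_assoc]

lemma jw_sq_tail (hM : 2 ≤ M)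
    (hanti : ∀ j : ℕ, j ≤ M - 1 → η j * η (j + 1) = -(η (j + 1) * η j))
    (hcomm : ∀ j k : ℕ, j < k → k ≤ M → 1 < k - j → η j * η k = η k * η j)
    (hsq : ∀ j : ℕ, 1 ≤ j → j ≤ M → η j ^ 2 = 1) [Algebra ℂ A] :
    ∀ n m : ℕ, 1 ≤ m → m + n ≤ M →
      jwT η m (n + 1) * jwT η m (n + 1) = ((-1 : ℂ)) ^ n • (1 : A) := by
  intro n
  induction n with
  | zero =>
    intro m h1 h2
    rw [jwT_one, ← pow_two, hsq m h1 (by omega)]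
    simp
  | succ n ih =>
    intro m h1 h2
    rw [jwT_cons η m (n + 1)]
    calc (η m * jwT η (m + 1) (n + 1)) * (η m * jwT η (m + 1) (n + 1))
        = η m * ((jwT η (m + 1) (n + 1) * η m) * jwT η (m + 1) (n + 1)) := by
          simp only [mul_assoc]
      _ = η m * ((-(η m * jwT η (m + 1) (n + 1))) * jwT η (m + 1) (n + 1)) := by
          rw [jw_anti_tail η hM hanti hcomm m n (by omega) (by omega)]
      _ = -((η m * η m) * (jwT η (m + 1) (n + 1) * jwT η (m + 1) (n + 1))) := by
          simp only [neg_mul, mul_neg, mul_assoc]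
      _ = -((1 : A) * (((-1 : ℂ)) ^ n • (1 : A))) := by
          rw [← pow_two, hsq m h1 (by omega), ih (m + 1) (by omega) (by omega)]
      _ = ((-1 : ℂ)) ^ (n + 1) • (1 : A) := by
          rw [one_mul, pow_succ, mul_neg_one, neg_smul]

lemma jw_sqP (hM : 2 ≤ M)
    (hanti : ∀ j : ℕ, j ≤ M - 1 → η j * η (j + 1) = -(η (j + 1) * η j))
    (hcomm : ∀ j k : ℕ, j < k → k ≤ M → 1 < k - j → η j * η k = η k * η j)
    (hsq : ∀ j : ℕ, 1 ≤ j → j ≤ M → η j ^ 2 = 1)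
    (hsq0 : η 0 ^ 2 = -1) [Algebra ℂ A] :
    ∀ j : ℕ, j + 1 ≤ M →
      jwT η 0 (j + 1) * jwT η 0 (j + 1) = ((-1 : ℂ)) ^ (j + 1) • (1 : A) := by
  intro j hj
  cases j with
  | zero =>
    rw [jwT_one, ← pow_two, hsq0]
    simp
  | succ i =>
    rw [jwT_cons η 0 (i + 1)]
    calc (η 0 * jwT η (0 + 1) (i + 1)) * (η 0 * jwT η (0 + 1) (i + 1))
        = η 0 * ((jwT η (0 + 1) (i + 1) * η 0) * jwT η (0 + 1) (i + 1)) := by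
          simp only [mul_assoc]
      _ = η 0 * ((-(η 0 * jwT η (0 + 1) (i + 1))) * jwT η (0 + 1) (i + 1)) := by
          rw [show (0 : ℕ) + 1 = 0 + 1 from rfl]
          rw [jw_anti_tail η hM hanti hcomm 0 i (by omega) (by omega)]
      _ = -((η 0 * η 0) * (jwT η (0 + 1) (i + 1) * jwT η (0 + 1) (i + 1))) := by
          simp only [neg_mul, mul_neg, mul_assoc]
      _ = -((-1 : A) * (((-1 : ℂ)) ^ i • (1 : A))) := by
          rw [← pow_two, hsq0]
          norm_num
          rw [jw_sq_tail η hM hanti hcomm hsq i 1 le_rfl (by omega)]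
      _ = ((-1 : ℂ)) ^ (i + 1 + 1) • (1 : A) := by
          rw [neg_one_mul, neg_neg, pow_succ, pow_succ, mul_neg_one, mul_neg_one, neg_neg]

lemma jw_antiP (hM : 2 ≤ M)
    (hanti : ∀ j : ℕ, j ≤ M - 1 → η j * η (j + 1) = -(η (j + 1) * η j))
    (hcomm : ∀ j k : ℕ, j < k → k ≤ M → 1 < k - j → η j * η k = η k * η j)
    (j k : ℕ) (hjk : j < k) (hkM : k ≤ M) :
    jwT η 0 (k + 1) * jwT η 0 (j + 1) = -(jwT η 0 (j + 1) * jwT η 0 (k + 1)) := by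
  obtain ⟨d, rfl⟩ : ∃ d, k = j + 1 + d := ⟨k - j - 1, by omega⟩
  have hsplit : jwT η 0 (j + 1 + d + 1) = jwT η 0 (j + 1) * jwT η (j + 1) (d + 1) := by
    rw [show j + 1 + d + 1 = (j + 1) + (d + 1) from rfl, jwT_append η 0 (j + 1) (d + 1),
      Nat.zero_add]
  have h1 : η (j + 1) * jwT η 0 (j + 1) = -(jwT η 0 (j + 1) * η (j + 1)) := by
    have hsp : jwT η 0 (j + 1) = jwT η 0 j * η j := by
      rw [jwT_append η 0 j 1, Nat.zero_add, jwT_one]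
    rw [hsp, ← mul_assoc, jw_comm_pref η hcomm (j + 1) j (by omega) (by omega),
      mul_assoc, jw_anti η hM hanti j (by omega), mul_neg, ← mul_assoc]
  have h2 : jwT η (j + 2) d * jwT η 0 (j + 1) = jwT η 0 (j + 1) * jwT η (j + 2) d := by
    apply jw_prod_comm
    intro i hi
    rw [List.mem_range'] at hi
    obtain ⟨t, ht, rfl⟩ := hi
    exact jw_comm_pref η hcomm (j + 2 + 1 * t) (j + 1) (by omega) (by omega)
  have h3 : jwT η (j + 1) (d + 1) * jwT η 0 (j + 1) =
      -(jwT η 0 (j + 1) * jwT η (j + 1) (d + 1)) := by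
    rw [jwT_cons η (j + 1) d, mul_assoc, h2, ← mul_assoc, h1, neg_mul, mul_assoc]
  rw [hsplit, mul_assoc, h3, mul_neg, ← mul_assoc]
end JW

/-- the algebraic generalization of the Jordan–Wigner
transformation, eq. (2) of the paper.  Given `η_0, η_1, …, η_M` with
`η_j η_{j+1} = −η_{j+1} η_j`, `η_j η_k = η_k η_j` for `k − j > 1`, `η_j² = 1`
for `1 ≤ j ≤ M` and `η_0² = −1`, the elements
`φ_j = (1/√2) exp(iπ(j−1)/2) η_0 η_1 ⋯ η_j` (for `0 ≤ j ≤ M−1`) satisfy the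
canonical anticommutation relations `φ_j φ_k + φ_k φ_j = δ_{jk}·1`, and
`(−2i) φ_j φ_{j+1} = η_{j+1}` for `0 ≤ j ≤ M−2`. -/
theorem jordan_wigner_generalization
    (M : ℕ) (hM : 2 ≤ M) (A : Type*) [Ring A] [Algebra ℂ A]
    (η : ℕ → A)
    (hanti : ∀ j : ℕ, j ≤ M - 1 → η j * η (j + 1) = -(η (j + 1) * η j))
    (hcomm : ∀ j k : ℕ, j < k → k ≤ M → 1 < k - j → η j * η k = η k * η j)
    (hsq : ∀ j : ℕ, 1 ≤ j → j ≤ M → η j ^ 2 = 1)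
    (hsq0 : η 0 ^ 2 = -1)
    (φ : ℕ → A)
    (hφ : ∀ j : ℕ, φ j = (((Real.sqrt 2 : ℂ))⁻¹ *
      Complex.exp (Complex.I * (Real.pi : ℂ) * ((j : ℂ) - 1) / 2)) •
      ((List.range (j + 1)).map η).prod) :
    (∀ j k : ℕ, j ≤ M - 1 → k ≤ M - 1 →
      φ j * φ k + φ k * φ j = if j = k then (1 : A) else 0) ∧
    (∀ j : ℕ, j ≤ M - 2 → (-2 * Complex.I) • (φ j * φ (j + 1)) = η (j + 1)) := by
  have hφ' : ∀ j : ℕ, φ j = jwc j • jwT η 0 (j + 1) := by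
    intro j
    rw [hφ j, List.range_eq_range']
    rfl
  constructor
  · intro j k hj hk
    by_cases hjk : j = k
    · subst hjk
      rw [hφ' j, smul_mul_assoc, mul_smul_comm, smul_smul,
        jw_sqP η hM hanti hcomm hsq hsq0 j (by omega), smul_smul, ← add_smul]
      have hs : jwc j * jwc j * (-1 : ℂ) ^ (j + 1) +
          jwc j * jwc j * (-1 : ℂ) ^ (j + 1) = 1 := by
        linear_combination 2 * jw_scalarA j
      rw [hs, one_smul, if_pos rfl]
    · rw [if_neg hjk]
      have key : ∀ a b : ℕ, a < b → b ≤ M - 1 → φ a * φ b + φ b * φ a = 0 := by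
        intro a b hab hbM
        rw [hφ' a, hφ' b, smul_mul_assoc, mul_smul_comm, smul_smul,
          smul_mul_assoc, mul_smul_comm, smul_smul,
          jw_antiP η hM hanti hcomm a b hab (by omega), smul_neg,
          mul_comm (jwc b) (jwc a), add_neg_cancel]
      rcases lt_or_gt_of_ne hjk with h | h
      · exact key j k h hk
      · rw [add_comm]; exact key k j h hj
  · intro j hj
    rw [hφ' j, hφ' (j + 1), smul_mul_assoc, mul_smul_comm, smul_smul]
    have hPP : jwT η 0 (j + 1) * jwT η 0 (j + 1 + 1) =
        ((-1 : ℂ)) ^ (j + 1) • η (j + 1) := by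
      rw [jwT_append η 0 (j + 1) 1, Nat.zero_add, jwT_one, ← mul_assoc,
        jw_sqP η hM hanti hcomm hsq hsq0 j (by omega), smul_mul_assoc, one_mul]
    rw [hPP, smul_smul, smul_smul,
      show -2 * Complex.I * jwc j * jwc (j + 1) * (-1 : ℂ) ^ (j + 1) =
        (-2 * Complex.I) * (jwc j * jwc (j + 1) * (-1) ^ (j + 1)) from by ring,
      jw_scalarB j, one_smul]
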